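/- arXiv:2408.09974 — 3 statements merged into one kernel-verified Lean document; each statement's English description precedes it below -/
import Mathlib

section
/- Let Q1, Q2, d1, d2 be real numbers. Define the extrinsic softmax policy probability p_ext = exp(Q1) / (exp(Q1) + exp(Q2)) for action a1, and the total softmax policy probability p_tot = exp(Q1 + d1) / (exp(Q1 + d1) + exp(Q2 + d2)) for action a1. If 0 ≤ d2 − d1 and d2 − d1 ≤ 2·(Q1 − Q2), then the binary Shannon entropy satisfies H(p_ext) ≤ H(p_tot), where H(p) = −p·log p − (1−p)·log(1−p). -/
/-- Binary Shannon entropy `H(p) = -p log p - (1-p) log (1-p)`. -/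
noncomputable def binEntropy (p : ℝ) : ℝ :=
  -p * Real.log p - (1 - p) * Real.log (1 - p)

lemma binEntropy_eq (p : ℝ) : binEntropy p = Real.binEntropy p := by
  simp [binEntropy, Real.binEntropy, Real.log_inv]; ring

/-- Lemma 1 (two-action case): if `0 ≤ d2 - d1 ≤ 2 (Q1 - Q2)` then the entropy of the
extrinsic softmax policy is at most that of the total softmax policy. -/
theorem entropy_ext_le_entropy_total (Q1 Q2 d1 d2 : ℝ)
    (h0 : 0 ≤ d2 - d1) (h1 : d2 - d1 ≤ 2 * (Q1 - Q2)) :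
    binEntropy (Real.exp Q1 / (Real.exp Q1 + Real.exp Q2)) ≤
      binEntropy (Real.exp (Q1 + d1) / (Real.exp (Q1 + d1) + Real.exp (Q2 + d2))) := by
  rw [binEntropy_eq, binEntropy_eq]
  set p := Real.exp Q1 / (Real.exp Q1 + Real.exp Q2) with hp
  set q := Real.exp (Q1 + d1) / (Real.exp (Q1 + d1) + Real.exp (Q2 + d2)) with hq
  have e1 : (0:ℝ) < Real.exp Q1 := Real.exp_pos _
  have e2 : (0:ℝ) < Real.exp Q2 := Real.exp_pos _
  have e3 : (0:ℝ) < Real.exp (Q1 + d1) := Real.exp_pos _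
  have e4 : (0:ℝ) < Real.exp (Q2 + d2) := Real.exp_pos _
  have D1 : (0:ℝ) < Real.exp Q1 + Real.exp Q2 := by linarith
  have D2 : (0:ℝ) < Real.exp (Q1 + d1) + Real.exp (Q2 + d2) := by linarith
  have hq0 : 0 ≤ q := le_of_lt (div_pos e3 D2)
  have hq1 : q ≤ 1 := by
    rw [hq, div_le_one D2]; linarith
  -- key cross-multiplied facts
  have key1 : Real.exp (Q1 + d1) * Real.exp Q2 ≤ Real.exp Q1 * Real.exp (Q2 + d2) := by
    rw [← Real.exp_add, ← Real.exp_add]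
    exact Real.exp_le_exp.mpr (by linarith)
  have key2 : Real.exp Q2 * Real.exp (Q2 + d2) ≤ Real.exp (Q1 + d1) * Real.exp Q1 := by
    rw [← Real.exp_add, ← Real.exp_add]
    exact Real.exp_le_exp.mpr (by linarith)
  have hqp : q ≤ p := by
    rw [hp, hq, div_le_div_iff₀ D2 D1]
    nlinarith
  have h1p : 1 - p = Real.exp Q2 / (Real.exp Q1 + Real.exp Q2) := by
    rw [hp]; field_simp; ring
  have h1pq : 1 - p ≤ q := by
    rw [h1p, hq, div_le_div_iff₀ D1 D2]
    nlinarith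
  rw [← Real.binEntropy_one_sub p]
  rcases le_or_gt q 2⁻¹ with hhalf | hhalf
  · exact Real.binEntropy_strictMonoOn.monotoneOn
      ⟨by linarith [div_le_one D1 |>.mpr (by linarith : Real.exp Q1 ≤ Real.exp Q1 + Real.exp Q2)],
        by linarith⟩ ⟨hq0, hhalf⟩ h1pq
  · rw [← Real.binEntropy_one_sub q]
    exact Real.binEntropy_strictMonoOn.monotoneOn
      ⟨by linarith [div_le_one D1 |>.mpr (by linarith : Real.exp Q1 ≤ Real.exp Q1 + Real.exp Q2)],
        by linarith⟩ ⟨by linarith, by linarith⟩ (by linarith)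
end

section
/- Let Q1, Q2, d1, d2 be real numbers satisfying 0 ≤ d2 − d1 and d2 − d1 ≤ 2·(Q1 − Q2). Then the total softmax probability of the suboptimal action a2 is at most the extrinsic softmax probability of the optimal action a1: exp(Q2 + d2) / (exp(Q1 + d1) + exp(Q2 + d2)) ≤ exp(Q1) / (exp(Q1) + exp(Q2)). -/
/-- Key intermediate inequality in Lemma 1: under `0 ≤ d2 - d1 ≤ 2 (Q1 - Q2)`, the total
softmax probability of `a2` is at most the extrinsic softmax probability of `a1`. -/
theorem total_prob_a2_le_ext_prob_a1 (Q1 Q2 d1 d2 : ℝ)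
    (h0 : 0 ≤ d2 - d1) (h1 : d2 - d1 ≤ 2 * (Q1 - Q2)) :
    Real.exp (Q2 + d2) / (Real.exp (Q1 + d1) + Real.exp (Q2 + d2)) ≤
      Real.exp Q1 / (Real.exp Q1 + Real.exp Q2) := by
  have p1 := Real.exp_pos (Q1 + d1)
  have p2 := Real.exp_pos (Q2 + d2)
  have q1 := Real.exp_pos Q1
  have q2 := Real.exp_pos Q2
  rw [div_le_div_iff₀ (by linarith) (by linarith)]
  have key : Real.exp (Q2 + d2) * Real.exp Q2 ≤ Real.exp Q1 * Real.exp (Q1 + d1) := by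
    rw [← Real.exp_add, ← Real.exp_add]
    exact Real.exp_le_exp.mpr (by linarith)
  nlinarith [mul_pos p2 q1]
end

section
/- Let Q1, Q2 be real numbers with Q1 ≥ Q2, and let d > 0. Then adding the bonus d only to the Q-value of action a1 strictly decreases the entropy of the softmax policy: H( exp(Q1 + d) / (exp(Q1 + d) + exp(Q2)) ) < H( exp(Q1) / (exp(Q1) + exp(Q2)) ), where H(p) = −p·log p − (1−p)·log(1−p). -/
/-- Case II of Theorem 2: adding a positive bonus `d` only to the Q-value of the optimal
action `a1` (with `Q1 ≥ Q2`) strictly decreases the entropy of the softmax policy. -/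
theorem entropy_strict_decrease_of_bonus_on_optimal (Q1 Q2 d : ℝ)
    (hQ : Q1 ≥ Q2) (hd : 0 < d) :
    binEntropy (Real.exp (Q1 + d) / (Real.exp (Q1 + d) + Real.exp Q2)) <
      binEntropy (Real.exp Q1 / (Real.exp Q1 + Real.exp Q2)) := by
  rw [binEntropy_eq, binEntropy_eq]
  set a := Real.exp Q1 with ha
  set b := Real.exp Q2 with hb
  set c := Real.exp (Q1 + d) with hc
  have hapos : 0 < a := Real.exp_pos _
  have hbpos : 0 < b := Real.exp_pos _
  have hcpos : 0 < c := Real.exp_pos _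
  have hba : b ≤ a := Real.exp_le_exp.mpr hQ
  have hac : a < c := Real.exp_lt_exp.mpr (by linarith)
  have h1 : (2:ℝ)⁻¹ ≤ a / (a + b) := by
    rw [le_div_iff₀ (by linarith)]; linarith
  have h2 : a / (a + b) ≤ 1 := by
    rw [div_le_one (by linarith)]; linarith
  have h3 : (2:ℝ)⁻¹ ≤ c / (c + b) := by
    rw [le_div_iff₀ (by linarith)]; linarith
  have h4 : c / (c + b) ≤ 1 := by
    rw [div_le_one (by linarith)]; linarith
  have hlt : a / (a + b) < c / (c + b) := by
    rw [div_lt_div_iff₀ (by linarith) (by linarith)]; nlinarith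
  exact Real.binEntropy_strictAntiOn ⟨h1, h2⟩ ⟨h3, h4⟩ hlt
end
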